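/- Let x k : Fin n → ℝ, v : ℝ with v ≠ 0, b : Fin n → ℝ with ∑ j, b j = 0, and define y := ∑ j, (x j * k j * v + b j) and Con := ∑ j, x j * k j. With w := 1/v, if v > 0 then (0 : ℝ) * y + w * max y 0 = max Con 0, and if v < 0 then w * y + (-w) * max y 0 = max Con 0. Hence the full CHEETAH pipeline (zero-sum blinding, multiplicative blinding, polar-indicator recovery) computes the true ReLu of the convolution element. -/

import Mathlib

theorem stmt11 (n : ℕ) (x k b : Fin n → ℝ) (v : ℝ)
    (hv : v ≠ 0) (hb : ∑ j, b j = 0) :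
    let Con := ∑ j, x j * k j
    let y := ∑ j, (x j * k j * v + b j)
    let w := 1 / v
    (v > 0 → (0 : ℝ) * y + w * max y 0 = max Con 0) ∧
    (v < 0 → w * y + (-w) * max y 0 = max Con 0) := by
  intro Con y w
  have hy : y = Con * v := by
    simp only [y, Con, Finset.sum_add_distrib, hb, ← Finset.sum_mul, add_zero]
  constructor
  · intro hvpos
    rw [hy, zero_mul, zero_add]
    rcases le_or_gt Con 0 with h | h
    · rw [max_eq_right (mul_nonpos_of_nonpos_of_nonneg h hvpos.le),
        max_eq_right h, mul_zero]
    · rw [max_eq_left (mul_nonneg h.le hvpos.le),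
        max_eq_left h.le]
      simp only [w]; field_simp
  · intro hvneg
    rw [hy]
    rcases le_or_gt Con 0 with h | h
    · rw [max_eq_left (by nlinarith : (0:ℝ) ≤ Con * v),
        max_eq_right h]
      field_simp [w]
      try ring
    · rw [max_eq_right (mul_nonpos_of_nonneg_of_nonpos h.le hvneg.le),
        max_eq_left h.le, mul_zero]
      simp only [w, add_zero]; field_simp
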